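/- (Theorem 1, variance) For every x ∈ ℝ^n, the variance of the acceptance ratio under the proposal distribution satisfies v_η² := ∫_{ℝ^n} η(z, x)² g(z) dz − (∫_{ℝ^n} η(z, x) g(z) dz)² = (1/N₂ − 1/N₁²)/w(x)². -/

import Mathlib

open Matrix MeasureTheory ProbabilityTheory Finset

noncomputable section

theorem gauss_shift_aux (a d s : ℝ) (ha : 0 ≤ a) (hd : 0 < d) :
    ∫ y : ℝ, Real.exp (-(1/2) * (a * y^2 + d * (y - s)^2)) =
      Real.sqrt (2 * Real.pi / (a + d)) * Real.exp (-(1/2) * (a * d * s^2 / (a + d))) := by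
  have had : 0 < a + d := by linarith
  have hid : ∀ y : ℝ, -(1/2) * (a * y^2 + d * (y - s)^2)
      = -((a+d)/2) * (y - d*s/(a+d))^2 + -(1/2) * (a*d*s^2/(a+d)) := by
    intro y; field_simp; ring
  simp_rw [hid, Real.exp_add]
  rw [MeasureTheory.integral_mul_const]
  rw [MeasureTheory.integral_sub_right_eq_self (fun y => Real.exp (-((a+d)/2) * y^2)) (d*s/(a+d))]
  rw [integral_gaussian]
  congr 2
  rw [div_div_eq_mul_div]; ring

theorem integral_comp_mulVec_det_aux {n : ℕ} (T : Matrix (Fin n) (Fin n) ℝ) (hT : T.det ≠ 0)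
    (F : (Fin n → ℝ) → ℝ) (hF : Continuous F) :
    ∫ z : Fin n → ℝ, F (T *ᵥ z) = |T.det|⁻¹ * ∫ y : Fin n → ℝ, F y := by
  have hm : Measurable (Matrix.toLin' T) := LinearMap.continuous_on_pi _ |>.measurable
  have h1 : ∫ y, F y ∂(Measure.map (Matrix.toLin' T) volume) = ∫ z : Fin n → ℝ, F (T *ᵥ z) := by
    rw [MeasureTheory.integral_map hm.aemeasurable hF.aestronglyMeasurable]
    simp [Matrix.toLin'_apply]
  rw [← h1, Real.map_matrix_volume_pi_eq_smul_volume_pi hT, integral_smul_measure,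
    ENNReal.toReal_ofReal (by positivity), smul_eq_mul, abs_inv]

theorem outer_rep_aux {n : ℕ} (v : Fin n → Fin n → ℝ) (c : Fin n → ℝ) :
    (Matrix.of v)ᵀ * Matrix.diagonal c * (Matrix.of v) = ∑ j, c j • vecMulVec (v j) (v j) := by
  ext i i'
  simp only [Matrix.mul_apply, Matrix.diagonal_apply, mul_ite, ite_mul, mul_zero, zero_mul,
    Finset.sum_ite_eq, Finset.sum_ite_eq', Finset.mem_univ, if_true, Matrix.sum_apply,
    Matrix.smul_apply, Matrix.vecMulVec_apply, Matrix.transpose_apply, Matrix.of_apply,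
    smul_eq_mul]
  exact Finset.sum_congr rfl fun j _ => by ring

theorem quad_diag_aux {n : ℕ} (T : Matrix (Fin n) (Fin n) ℝ) (c : Fin n → ℝ) (x : Fin n → ℝ) :
    x ⬝ᵥ ((Tᵀ * Matrix.diagonal c * T) *ᵥ x) = ∑ j, c j * ((T *ᵥ x) j)^2 := by
  rw [← Matrix.mulVec_mulVec, ← Matrix.mulVec_mulVec, Matrix.dotProduct_mulVec,
    Matrix.vecMul_transpose]
  simp only [Matrix.mulVec_diagonal, dotProduct, Pi.mul_apply]
  exact Finset.sum_congr rfl fun j _ => by ring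

theorem sqrt_prod_aux {ι : Type*} (s : Finset ι) (f : ι → ℝ) (h : ∀ i, 0 ≤ f i) :
    Real.sqrt (∏ i ∈ s, f i) = ∏ i ∈ s, Real.sqrt (f i) := by
  induction s using Finset.cons_induction with
  | empty => simp
  | cons a s ha ih => rw [Finset.prod_cons, Finset.prod_cons, Real.sqrt_mul (h a), ih]

theorem rpow_neg_half_aux {x : ℝ} (hx : 0 ≤ x) : x ^ (-(1:ℝ)/2) = (Real.sqrt x)⁻¹ := by
  rw [Real.sqrt_eq_rpow, show (-(1:ℝ)/2) = -(1/2 : ℝ) by norm_num, Real.rpow_neg hx]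

theorem two_pi_pow_aux (n : ℕ) :
    (2 * Real.pi) ^ (-(n : ℝ) / 2) = ∏ _j : Fin n, (Real.sqrt (2 * Real.pi))⁻¹ := by
  have h2π : (0:ℝ) ≤ 2 * Real.pi := by positivity
  rw [Finset.prod_const, Finset.card_univ, Fintype.card_fin, inv_pow,
    Real.sqrt_eq_rpow, ← Real.rpow_natCast ((2 * Real.pi) ^ ((1:ℝ)/2)) n,
    ← Real.rpow_mul h2π, ← Real.rpow_neg h2π]
  congr 1
  ring

set_option maxHeartbeats 1000000 in
theorem stmt11
    (m n : ℕ) (hm : 0 < m) (hn : 0 < n)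
    (A : Matrix (Fin m) (Fin n) ℝ) (L : Matrix (Fin n) (Fin n) ℝ) (hL : IsUnit L.det)
    (μ σ : ℝ) (hμ : 0 < μ) (hσ : 0 < σ)
    (b : Fin m → ℝ)
    (v : Fin n → Fin n → ℝ) (lam : Fin n → ℝ)
    (horth : ∀ i j, v i ⬝ᵥ v j = if i = j then (1 : ℝ) else 0)
    (hlam_nonneg : ∀ j, 0 ≤ lam j) (hlam_anti : Antitone lam)
    (hHdecomp : (L⁻¹)ᵀ * Aᵀ * A * L⁻¹ = ∑ j, lam j • vecMulVec (v j) (v j))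
    (k : ℕ) (hk : k ≤ n)
    (Γcond : Matrix (Fin n) (Fin n) ℝ)
    (hΓcond : Γcond = (μ • (Aᵀ * A) + σ • (Lᵀ * L))⁻¹)
    (Γhat : Matrix (Fin n) (Fin n) ℝ)
    (hΓhat : Γhat = L⁻¹ * (σ • (1 : Matrix (Fin n) (Fin n) ℝ) +
        μ • ∑ j ∈ Finset.univ.filter (fun j : Fin n => (j : ℕ) < k),
          lam j • vecMulVec (v j) (v j))⁻¹ * (L⁻¹)ᵀ)
    (xhat : Fin n → ℝ) (hxhat : xhat = μ • (Γhat *ᵥ (Aᵀ *ᵥ b)))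
    (w : (Fin n → ℝ) → ℝ)
    (hw : ∀ x, w x = Real.exp (-(1/2) * (x ⬝ᵥ ((Γcond⁻¹ - Γhat⁻¹) *ᵥ x))))
    (η : (Fin n → ℝ) → (Fin n → ℝ) → ℝ)
    (hη : ∀ z x, η z x = w z / w x)
    (gfun : (Fin n → ℝ) → ℝ)
    (hgfun : ∀ x, gfun x = (2 * Real.pi) ^ (-(n : ℝ) / 2) * Γhat.det ^ (-(1 : ℝ) / 2) *
        Real.exp (-(1/2) * ((x - xhat) ⬝ᵥ (Γhat⁻¹ *ᵥ (x - xhat)))))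
    (N : ℕ → ℝ)
    (hN : ∀ ℓ : ℕ, N ℓ = Real.exp ((μ ^ 2 / (2 * σ)) *
        ∑ j ∈ Finset.univ.filter (fun j : Fin n => k ≤ (j : ℕ)),
          (((ℓ : ℝ) * μ * lam j) / ((ℓ : ℝ) * μ * lam j + σ)) *
            (b ⬝ᵥ (A *ᵥ (L⁻¹ *ᵥ v j))) ^ 2) *
      ∏ j ∈ Finset.univ.filter (fun j : Fin n => k ≤ (j : ℕ)),
        Real.sqrt (1 + (ℓ : ℝ) * μ * lam j / σ))
    :
    ∀ x : Fin n → ℝ,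
      (∫ z : Fin n → ℝ, η z x ^ 2 * gfun z) - (∫ z : Fin n → ℝ, η z x * gfun z) ^ 2 =
        (1 / N 2 - 1 / N 1 ^ 2) / w x ^ 2 := by
  intro x
  -- basic facts about L
  have hLl : L⁻¹ * L = 1 := Matrix.nonsing_inv_mul L hL
  have hLr : L * L⁻¹ = 1 := Matrix.mul_nonsing_inv L hL
  have hdetL : L.det ≠ 0 := hL.ne_zero
  have hdetLinv : (L⁻¹).det = (L.det)⁻¹ := by
    have h : (L⁻¹).det * L.det = 1 := by rw [← Matrix.det_mul, hLl, Matrix.det_one]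
    exact eq_inv_of_mul_eq_one_left h
  -- the orthogonal matrix P with rows v j
  set P : Matrix (Fin n) (Fin n) ℝ := Matrix.of v with hPdef
  have hPPt : P * Pᵀ = 1 := by
    ext i j
    simp only [Matrix.mul_apply, Matrix.transpose_apply, Matrix.of_apply, Matrix.one_apply, hPdef]
    simpa [dotProduct] using horth i j
  have hPtP : Pᵀ * P = 1 := mul_eq_one_comm.mp hPPt
  have hdetP2 : P.det * P.det = 1 := by
    have h := congrArg Matrix.det hPPt
    rwa [Matrix.det_mul, Matrix.det_transpose, Matrix.det_one] at h
  have habsP : |P.det| = 1 := by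
    rcases mul_self_eq_one_iff.mp hdetP2 with h | h <;> rw [h] <;> norm_num
  have houter : ∀ c : Fin n → ℝ,
      Pᵀ * Matrix.diagonal c * P = ∑ j, c j • vecMulVec (v j) (v j) :=
    fun c => outer_rep_aux v c
  -- cancellation helpers
  have hcanL : ∀ X : Matrix (Fin n) (Fin n) ℝ, L * (L⁻¹ * X) = X := fun X => by
    rw [← Matrix.mul_assoc, hLr, Matrix.one_mul]
  have hcanP : ∀ X : Matrix (Fin n) (Fin n) ℝ, P * (Pᵀ * X) = X := fun X => by
    rw [← Matrix.mul_assoc, hPPt, Matrix.one_mul]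
  have hcanPt : ∀ X : Matrix (Fin n) (Fin n) ℝ, Pᵀ * (P * X) = X := fun X => by
    rw [← Matrix.mul_assoc, hPtP, Matrix.one_mul]
  have hcanLt : ∀ X : Matrix (Fin n) (Fin n) ℝ, Lᵀ * ((L⁻¹)ᵀ * X) = X := fun X => by
    rw [← Matrix.mul_assoc, ← Matrix.transpose_mul, hLl, Matrix.transpose_one, Matrix.one_mul]
  have hcanLtinv : ∀ X : Matrix (Fin n) (Fin n) ℝ, (L⁻¹)ᵀ * (Lᵀ * X) = X := fun X => by
    rw [← Matrix.mul_assoc, ← Matrix.transpose_mul, hLr, Matrix.transpose_one, Matrix.one_mul]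
  -- coefficient functions
  set dd : Fin n → ℝ := fun j => σ + μ * (if (j : ℕ) < k then lam j else 0) with hdd
  set ee : Fin n → ℝ := fun j => if (j : ℕ) < k then 0 else μ * lam j with hee
  set cc : Fin n → ℝ := fun j => μ * lam j + σ with hcc
  have hdd_pos : ∀ j, 0 < dd j := by
    intro j; by_cases h : (j : ℕ) < k <;> simp only [hdd, h, if_true, if_false]
    · nlinarith [hlam_nonneg j]
    · simpa using hσ
  have hee_nonneg : ∀ j, 0 ≤ ee j := by
    intro j; by_cases h : (j : ℕ) < k <;> simp only [hee, h, if_true, if_false]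
    · exact le_refl 0
    · exact mul_nonneg hμ.le (hlam_nonneg j)
  have hcc_pos : ∀ j, 0 < cc j := by
    intro j; simp only [hcc]; nlinarith [hlam_nonneg j]
  have hsum_cd : ∀ j, ee j + dd j = cc j := by
    intro j; by_cases h : (j : ℕ) < k <;> simp only [hdd, hee, hcc, h, if_true, if_false] <;> ring
  set dinv : Fin n → ℝ := fun j => (dd j)⁻¹ with hdinv
  -- the matrix M = σ•1 + μ•∑_{j<k} λ_j v_j v_jᵀ
  have hvv1 : ∑ j, vecMulVec (v j) (v j) = (1 : Matrix (Fin n) (Fin n) ℝ) := by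
    have h := houter (fun _ => (1:ℝ))
    rw [show Matrix.diagonal (fun _ : Fin n => (1:ℝ)) = 1 from Matrix.diagonal_one,
      Matrix.mul_one, hPtP] at h
    simpa [one_smul] using h.symm
  have hMrep : σ • (1 : Matrix (Fin n) (Fin n) ℝ) +
      μ • ∑ j ∈ Finset.univ.filter (fun j : Fin n => (j : ℕ) < k),
        lam j • vecMulVec (v j) (v j) = Pᵀ * Matrix.diagonal dd * P := by
    rw [houter dd, ← hvv1, Finset.sum_filter, Finset.smul_sum, Finset.smul_sum,
      ← Finset.sum_add_distrib]
    refine Finset.sum_congr rfl fun j _ => ?_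
    by_cases h : (j : ℕ) < k
    · rw [if_pos h, smul_smul, ← add_smul]
      congr 1
      simp [hdd, h]
    · rw [if_neg h, smul_zero, add_zero]
      congr 1
      simp [hdd, h]
  have hMinv : (Pᵀ * Matrix.diagonal dd * P)⁻¹ = Pᵀ * Matrix.diagonal dinv * P := by
    apply Matrix.inv_eq_right_inv
    have h1 : Pᵀ * Matrix.diagonal dd * P * (Pᵀ * Matrix.diagonal dinv * P)
        = Pᵀ * (Matrix.diagonal dd * (P * (Pᵀ * (Matrix.diagonal dinv * P)))) := by
      simp only [Matrix.mul_assoc]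
    rw [h1, hcanP, ← Matrix.mul_assoc (Matrix.diagonal dd), Matrix.diagonal_mul_diagonal]
    rw [show (Matrix.diagonal fun i => dd i * dinv i) = (1 : Matrix (Fin n) (Fin n) ℝ) by
      rw [show (fun i => dd i * dinv i) = fun _ : Fin n => (1:ℝ) from
        funext fun j => mul_inv_cancel₀ (hdd_pos j).ne']; exact Matrix.diagonal_one]
    rw [Matrix.one_mul, hPtP]
  -- Γhat in diagonal form
  have hGhat : Γhat = L⁻¹ * (Pᵀ * Matrix.diagonal dinv * P) * (L⁻¹)ᵀ := by
    rw [hΓhat, hMrep, hMinv]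
  have hGhatInv : Γhat⁻¹ = Lᵀ * (Pᵀ * Matrix.diagonal dd * P) * L := by
    rw [hGhat]
    apply Matrix.inv_eq_right_inv
    have h1 : L⁻¹ * (Pᵀ * Matrix.diagonal dinv * P) * (L⁻¹)ᵀ *
        (Lᵀ * (Pᵀ * Matrix.diagonal dd * P) * L)
        = L⁻¹ * (Pᵀ * (Matrix.diagonal dinv * (P * ((L⁻¹)ᵀ * (Lᵀ *
            (Pᵀ * (Matrix.diagonal dd * (P * L)))))))) := by
      simp only [Matrix.mul_assoc]
    rw [h1, hcanLtinv, hcanP, ← Matrix.mul_assoc (Matrix.diagonal dinv),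
      Matrix.diagonal_mul_diagonal]
    rw [show (Matrix.diagonal fun i => dinv i * dd i) = (1 : Matrix (Fin n) (Fin n) ℝ) by
      rw [show (fun i => dinv i * dd i) = fun _ : Fin n => (1:ℝ) from
        funext fun j => inv_mul_cancel₀ (hdd_pos j).ne']; exact Matrix.diagonal_one]
    rw [Matrix.one_mul, hcanPt, hLl]
  -- AᵀA in diagonal form
  have hAtA : Aᵀ * A = Lᵀ * (Pᵀ * Matrix.diagonal lam * P) * L := by
    rw [houter lam, ← hHdecomp]
    have h1 : Lᵀ * ((L⁻¹)ᵀ * Aᵀ * A * L⁻¹) * L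
        = Lᵀ * ((L⁻¹)ᵀ * (Aᵀ * (A * (L⁻¹ * L)))) := by simp only [Matrix.mul_assoc]
    rw [h1, hLl, Matrix.mul_one, hcanLt]
  -- the matrix μAᵀA + σLᵀL in diagonal form
  have hdiagcc : Matrix.diagonal cc =
      μ • Matrix.diagonal lam + σ • (1 : Matrix (Fin n) (Fin n) ℝ) := by
    ext i j
    by_cases h : i = j <;>
      simp [Matrix.diagonal_apply, h, hcc, Matrix.one_apply]
  have hW : μ • (Aᵀ * A) + σ • (Lᵀ * L) = Lᵀ * (Pᵀ * Matrix.diagonal cc * P) * L := by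
    rw [hAtA, hdiagcc]
    simp only [Matrix.mul_add, Matrix.add_mul, Matrix.mul_smul, Matrix.smul_mul,
      Matrix.mul_one, Matrix.one_mul, hPtP]
  have hWdet : (Lᵀ * (Pᵀ * Matrix.diagonal cc * P) * L).det
      = L.det * L.det * ∏ j, cc j := by
    simp only [Matrix.det_mul, Matrix.det_transpose, Matrix.det_diagonal]
    linear_combination (L.det * L.det * ∏ j, cc j) * hdetP2
  have hGcondInv : Γcond⁻¹ = Lᵀ * (Pᵀ * Matrix.diagonal cc * P) * L := by
    rw [hΓcond, hW]
    apply Matrix.nonsing_inv_nonsing_inv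
    rw [hWdet]
    have hp : 0 < ∏ j, cc j := Finset.prod_pos fun j _ => hcc_pos j
    exact isUnit_iff_ne_zero.mpr (mul_ne_zero (mul_ne_zero hdetL hdetL) hp.ne')
  -- the change of variables matrix
  set T : Matrix (Fin n) (Fin n) ℝ := P * L with hTdef
  have hdetT : T.det ≠ 0 := by
    rw [hTdef, Matrix.det_mul]
    intro h
    rcases mul_eq_zero.mp h with h | h
    · rw [h] at habsP; simp at habsP
    · exact hdetL h
  have habsT : |T.det| = |L.det| := by
    rw [hTdef, Matrix.det_mul, abs_mul, habsP, one_mul]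
  have hTt : ∀ c : Fin n → ℝ, Tᵀ * Matrix.diagonal c * T
      = Lᵀ * (Pᵀ * Matrix.diagonal c * P) * L := by
    intro c
    rw [hTdef, Matrix.transpose_mul]
    simp only [Matrix.mul_assoc]
  have hdiff : Γcond⁻¹ - Γhat⁻¹ = Tᵀ * Matrix.diagonal ee * T := by
    rw [hGcondInv, hGhatInv, hTt]
    have h2 : Matrix.diagonal cc = Matrix.diagonal ee + Matrix.diagonal dd := by
      exact (congrArg Matrix.diagonal (funext fun j => (hsum_cd j).symm)).trans
        (Matrix.diagonal_add _ _).symm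
    rw [h2]
    simp only [Matrix.mul_add, Matrix.add_mul]
    abel
  -- pointwise formulas for w and gfun
  have hwz : ∀ z, w z = Real.exp (-(1/2) * ∑ j, ee j * ((T *ᵥ z) j)^2) := by
    intro z
    rw [hw, hdiff, quad_diag_aux]
  set yh : Fin n → ℝ := T *ᵥ xhat with hyhdef
  have hgz : ∀ z, gfun z = (2 * Real.pi) ^ (-(n : ℝ) / 2) * Γhat.det ^ (-(1 : ℝ) / 2) *
      Real.exp (-(1/2) * ∑ j, dd j * ((T *ᵥ z) j - yh j)^2) := by
    intro z
    rw [hgfun]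
    congr 2
    rw [show Γhat⁻¹ = Tᵀ * Matrix.diagonal dd * T by rw [hGhatInv, hTt], quad_diag_aux,
      Matrix.mulVec_sub]
    simp [hyhdef, Pi.sub_apply]
  -- the mean in eigen-coordinates
  have hyh_eq : ∀ j, yh j = μ * ((dd j)⁻¹ * (b ⬝ᵥ (A *ᵥ (L⁻¹ *ᵥ v j)))) := by
    have hTG : T * Γhat = Matrix.diagonal dinv * (P * (L⁻¹)ᵀ) := by
      rw [hGhat, hTdef]
      have h1 : P * L * (L⁻¹ * (Pᵀ * Matrix.diagonal dinv * P) * (L⁻¹)ᵀ)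
          = P * (L * (L⁻¹ * (Pᵀ * (Matrix.diagonal dinv * (P * (L⁻¹)ᵀ))))) := by
        simp only [Matrix.mul_assoc]
      rw [h1, hcanL, hcanP]
    have hβ : ∀ j, (P *ᵥ ((L⁻¹)ᵀ *ᵥ (Aᵀ *ᵥ b))) j = b ⬝ᵥ (A *ᵥ (L⁻¹ *ᵥ v j)) := by
      intro j
      rw [Matrix.mulVec_transpose, Matrix.mulVec_transpose, Matrix.mulVec_mulVec,
        Matrix.dotProduct_mulVec, Matrix.vecMul_vecMul]
      simp only [Matrix.mulVec, dotProduct, hPdef, Matrix.of_apply]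
      exact Finset.sum_congr rfl fun l _ => mul_comm _ _
    intro j
    rw [hyhdef, hxhat, Matrix.mulVec_smul, Pi.smul_apply, smul_eq_mul,
      Matrix.mulVec_mulVec (Aᵀ *ᵥ b) T Γhat, hTG,
      ← Matrix.mulVec_mulVec (Aᵀ *ᵥ b) (Matrix.diagonal dinv) (P * (L⁻¹)ᵀ),
      Matrix.mulVec_diagonal,
      ← Matrix.mulVec_mulVec ((Aᵀ *ᵥ b)) P ((L⁻¹)ᵀ), hβ j]
  -- determinant of Γhat
  have hdetGhat : Γhat.det = L.det⁻¹ * L.det⁻¹ * ∏ j, (dd j)⁻¹ := by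
    rw [hGhat]
    simp only [Matrix.det_mul, Matrix.det_transpose, Matrix.det_diagonal, hdetLinv]
    linear_combination (L.det⁻¹ * L.det⁻¹ * ∏ j, (dd j)⁻¹) * hdetP2
  have hdetGhat_pos : 0 < Γhat.det := by
    rw [hdetGhat]
    have h1 : 0 < ∏ j, (dd j)⁻¹ := Finset.prod_pos fun j _ => inv_pos.mpr (hdd_pos j)
    have h2 : 0 < L.det⁻¹ * L.det⁻¹ := mul_self_pos.mpr (inv_ne_zero hdetL)
    exact mul_pos h2 h1
  have hCc : (2 * Real.pi) ^ (-(n : ℝ) / 2) * Γhat.det ^ (-(1 : ℝ) / 2)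
      = (∏ _j : Fin n, (Real.sqrt (2 * Real.pi))⁻¹) *
        (|L.det| * ∏ j, Real.sqrt (dd j)) := by
    rw [two_pi_pow_aux n]
    congr 1
    rw [rpow_neg_half_aux hdetGhat_pos.le, hdetGhat,
      Real.sqrt_mul (mul_self_nonneg L.det⁻¹), Real.sqrt_mul_self_eq_abs,
      sqrt_prod_aux _ _ (fun j => inv_nonneg.mpr (hdd_pos j).le)]
    rw [abs_inv, mul_inv, inv_inv]
    congr 1
    rw [show (∏ j, Real.sqrt (dd j)⁻¹) = ∏ j, (Real.sqrt (dd j))⁻¹ from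
      Finset.prod_congr rfl fun j _ => Real.sqrt_inv _, Finset.prod_inv_distrib, inv_inv]
  -- positivity of N
  have hNpos : ∀ ℓ : ℕ, 0 < N ℓ := by
    intro ℓ
    rw [hN]
    have h1 : 0 < ∏ j ∈ Finset.univ.filter (fun j : Fin n => k ≤ (j : ℕ)),
        Real.sqrt (1 + (ℓ : ℝ) * μ * lam j / σ) := by
      refine Finset.prod_pos fun j _ => Real.sqrt_pos.mpr ?_
      have : (0:ℝ) ≤ (ℓ : ℝ) * μ * lam j / σ :=
        div_nonneg (mul_nonneg (mul_nonneg (Nat.cast_nonneg ℓ) hμ.le) (hlam_nonneg j)) hσ.le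
      linarith
    exact mul_pos (Real.exp_pos _) h1
  -- THE KEY COMPUTATION
  have key : ∀ ℓ : ℕ, (∫ z : Fin n → ℝ, w z ^ ℓ * gfun z) = (N ℓ)⁻¹ := by
    intro ℓ
    set fj : Fin n → ℝ → ℝ := fun j y =>
      Real.exp (-(1/2) * ((ℓ : ℝ) * ee j * y^2 + dd j * (y - yh j)^2)) with hfj
    set Cc : ℝ := (2 * Real.pi) ^ (-(n : ℝ) / 2) * Γhat.det ^ (-(1 : ℝ) / 2) with hCcdef
    set F : (Fin n → ℝ) → ℝ := fun y => Cc * ∏ j, fj j (y j) with hF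
    have hpoint : ∀ z, w z ^ ℓ * gfun z = F (T *ᵥ z) := by
      intro z
      rw [hwz z, hgz z, hF]
      simp only
      rw [← Real.exp_nat_mul, mul_comm (Real.exp _) (Cc * Real.exp _), mul_assoc,
        ← Real.exp_add, hfj]
      simp only
      rw [← Real.exp_sum]
      congr 1
      simp only [Finset.mul_sum]
      rw [← Finset.sum_add_distrib]
      congr 1
      exact Finset.sum_congr rfl fun j _ => by ring
    have hfj_cont : ∀ j, Continuous (fj j) := by
      intro j
      apply Real.continuous_exp.comp
      fun_prop
    have hFcont : Continuous F := by
      apply continuous_const.mul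
      exact continuous_finset_prod _ fun j _ => (hfj_cont j).comp (continuous_apply j)
    have hintfj : ∀ j, (∫ y : ℝ, fj j y) =
        Real.sqrt (2 * Real.pi / ((ℓ : ℝ) * ee j + dd j)) *
        Real.exp (-(1/2) * ((ℓ : ℝ) * ee j * dd j * (yh j)^2 / ((ℓ : ℝ) * ee j + dd j))) := by
      intro j
      exact gauss_shift_aux ((ℓ : ℝ) * ee j) (dd j) (yh j)
        (mul_nonneg (Nat.cast_nonneg ℓ) (hee_nonneg j)) (hdd_pos j)
    calc (∫ z : Fin n → ℝ, w z ^ ℓ * gfun z) = ∫ z : Fin n → ℝ, F (T *ᵥ z) := by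
          exact integral_congr_ae (Filter.EventuallyEq.of_eq (funext hpoint))
      _ = |T.det|⁻¹ * ∫ y : Fin n → ℝ, F y := integral_comp_mulVec_det_aux T hdetT F hFcont
      _ = |T.det|⁻¹ * (Cc * ∏ j, ∫ y : ℝ, fj j y) := by
          rw [hF]
          simp only
          rw [MeasureTheory.integral_const_mul, MeasureTheory.integral_fintype_prod_volume_eq_prod]
      _ = (N ℓ)⁻¹ := by
          rw [hN]
          simp only [hintfj]
          rw [Finset.prod_mul_distrib]
          have hEpos : ∀ j, (0:ℝ) < (ℓ : ℝ) * ee j + dd j := fun j => by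
            have := hee_nonneg j
            have := hdd_pos j
            have : (0:ℝ) ≤ (ℓ : ℝ) * ee j := mul_nonneg (Nat.cast_nonneg ℓ) (hee_nonneg j)
            linarith [hdd_pos j]
          -- product of sqrt factors
          have hprodS : |T.det|⁻¹ * (Cc * ∏ j, Real.sqrt (2 * Real.pi / ((ℓ : ℝ) * ee j + dd j)))
              = (∏ j ∈ Finset.univ.filter (fun j : Fin n => k ≤ (j : ℕ)),
                  Real.sqrt (1 + (ℓ : ℝ) * μ * lam j / σ))⁻¹ := by
            rw [hCc, habsT, ← Finset.prod_inv_distrib, Finset.prod_filter]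
            have hstep : |L.det|⁻¹ * ((∏ _j : Fin n, (Real.sqrt (2 * Real.pi))⁻¹) *
                (|L.det| * ∏ j, Real.sqrt (dd j)) *
                ∏ j, Real.sqrt (2 * Real.pi / ((ℓ : ℝ) * ee j + dd j)))
                = ∏ j, ((Real.sqrt (2 * Real.pi))⁻¹ * Real.sqrt (dd j) *
                    Real.sqrt (2 * Real.pi / ((ℓ : ℝ) * ee j + dd j))) := by
              rw [Finset.prod_mul_distrib, Finset.prod_mul_distrib]
              have : |L.det| ≠ 0 := abs_ne_zero.mpr hdetL
              field_simp
            rw [hstep]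
            refine Finset.prod_congr rfl fun j _ => ?_
            have h2π : (0:ℝ) < 2 * Real.pi := by positivity
            have hs2π : Real.sqrt (2 * Real.pi) ≠ 0 := (Real.sqrt_pos.mpr h2π).ne'
            by_cases h : k ≤ (j : ℕ)
            · rw [if_pos h]
              have hjk : ¬ ((j : ℕ) < k) := not_lt.mpr h
              have heej : ee j = μ * lam j := by simp [hee, hjk]
              have hddj : dd j = σ := by simp [hdd, hjk]
              have hE : (ℓ : ℝ) * ee j + dd j = (ℓ : ℝ) * μ * lam j + σ := by
                rw [heej, hddj]; ring
              have hEpos' : (0:ℝ) < (ℓ : ℝ) * μ * lam j + σ := by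
                have : (0:ℝ) ≤ (ℓ : ℝ) * μ * lam j :=
                  mul_nonneg (mul_nonneg (Nat.cast_nonneg ℓ) hμ.le) (hlam_nonneg j)
                linarith
              have hfrac : 1 + (ℓ : ℝ) * μ * lam j / σ = ((ℓ : ℝ) * μ * lam j + σ) / σ := by
                field_simp
                ring
              rw [hE, hddj, hfrac, Real.sqrt_div' _ hσ.le, Real.sqrt_div h2π.le, inv_div]
              have hsE : Real.sqrt ((ℓ : ℝ) * μ * lam j + σ) ≠ 0 :=
                (Real.sqrt_pos.mpr hEpos').ne'
              have hsσ : Real.sqrt σ ≠ 0 := (Real.sqrt_pos.mpr hσ).ne'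
              field_simp
            · rw [if_neg h]
              have hjk : (j : ℕ) < k := not_le.mp h
              have heej : ee j = 0 := by simp [hee, hjk]
              have hE : (ℓ : ℝ) * ee j + dd j = dd j := by rw [heej]; ring
              rw [hE, Real.sqrt_div h2π.le]
              have hsd : Real.sqrt (dd j) ≠ 0 := (Real.sqrt_pos.mpr (hdd_pos j)).ne'
              field_simp
          -- product of exp factors
          have hprodE : (∏ j, Real.exp (-(1/2) *
                ((ℓ : ℝ) * ee j * dd j * (yh j)^2 / ((ℓ : ℝ) * ee j + dd j))))
              = (Real.exp ((μ ^ 2 / (2 * σ)) *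
                  ∑ j ∈ Finset.univ.filter (fun j : Fin n => k ≤ (j : ℕ)),
                    (((ℓ : ℝ) * μ * lam j) / ((ℓ : ℝ) * μ * lam j + σ)) *
                      (b ⬝ᵥ (A *ᵥ (L⁻¹ *ᵥ v j))) ^ 2))⁻¹ := by
            rw [← Real.exp_neg, ← Real.exp_sum]
            congr 1
            rw [Finset.sum_filter, Finset.mul_sum, ← Finset.sum_neg_distrib]
            refine Finset.sum_congr rfl fun j _ => ?_
            by_cases h : k ≤ (j : ℕ)
            · have hjk : ¬ ((j : ℕ) < k) := not_lt.mpr h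
              have heej : ee j = μ * lam j := by simp [hee, hjk]
              have hddj : dd j = σ := by simp [hdd, hjk]
              rw [if_pos h, heej, hyh_eq j, hddj]
              have hA : (0:ℝ) < (ℓ : ℝ) * μ * lam j + σ := by
                have : (0:ℝ) ≤ (ℓ : ℝ) * μ * lam j :=
                  mul_nonneg (mul_nonneg (Nat.cast_nonneg ℓ) hμ.le) (hlam_nonneg j)
                linarith
              have hB : (ℓ : ℝ) * (μ * lam j) + σ ≠ 0 := by
                rw [← mul_assoc]; exact hA.ne'
              field_simp
            · have hjk : (j : ℕ) < k := not_le.mp h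
              have heej : ee j = 0 := by simp [hee, hjk]
              rw [if_neg h, heej]
              simp
          rw [mul_inv, ← hprodE, ← hprodS]
          ring
  -- conclusion
  have hwx_pos : 0 < w x := by rw [hw]; exact Real.exp_pos _
  have e2 : (∫ z : Fin n → ℝ, η z x ^ 2 * gfun z) = (w x ^ 2)⁻¹ * (N 2)⁻¹ := by
    have hpt : ∀ z, η z x ^ 2 * gfun z = (w x ^ 2)⁻¹ * (w z ^ 2 * gfun z) := by
      intro z; rw [hη]; ring
    simp only [hpt]
    rw [MeasureTheory.integral_const_mul, key 2]
  have e1 : (∫ z : Fin n → ℝ, η z x * gfun z) = (w x)⁻¹ * (N 1)⁻¹ := by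
    have hpt : ∀ z, η z x * gfun z = (w x)⁻¹ * (w z ^ 1 * gfun z) := by
      intro z; rw [hη, pow_one]; ring
    simp only [hpt]
    rw [MeasureTheory.integral_const_mul, key 1]
  rw [e1, e2]
  have h1 : N 1 ≠ 0 := (hNpos 1).ne'
  have h2 : N 2 ≠ 0 := (hNpos 2).ne'
  field_simp
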